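/- arXiv:1907.04910 — 2 statements merged into one kernel-verified Lean document; each statement's English description precedes it below -/
import Mathlib

section
/- Let Y/X be an abelian cover of multigraphs with automorphism group G. For every non-trivial character χ of G, the order of vanishing r(χ) of L_{Y/X}(u,χ)^{-1} at u = 1 equals r_X − 1, where r_X = |E_X| − |V_X| + 1. -/
/-!  Multigraphs in the Serre formalism: a finite vertex set `V`, a finite set
`D` of darts (oriented edges / half-edges) together with a fixed-point-free
involution `inv` (reversing orientation) and a map `head` assigning to each
dart its terminal vertex.  Edges are the orbits of `inv`; loops and multiple
edges are allowed.  -/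
structure Multigraph where
  V : Type
  D : Type
  [fintypeV : Fintype V]
  [fintypeD : Fintype D]
  [decEqV : DecidableEq V]
  [decEqD : DecidableEq D]
  inv : D → D
  head : D → V
  inv_inv : ∀ d, inv (inv d) = d
  inv_ne : ∀ d, inv d ≠ d

namespace Multigraph

attribute [instance] Multigraph.fintypeV Multigraph.fintypeD Multigraph.decEqV Multigraph.decEqD

variable (Z : Multigraph)

/-- the initial vertex of a dart -/
def tail (d : Z.D) : Z.V := Z.head (Z.inv d)

/-- the number of edges `|E|`: each edge consists of exactly two darts -/
def numEdges : ℕ := Fintype.card Z.D / 2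

/-- the degree (valency) of a vertex: the number of darts with head `v`;
loops automatically count twice -/
def degree (v : Z.V) : ℕ := (Finset.univ.filter fun d : Z.D => Z.head d = v).card

/-- the number of darts with tail `v` and head `w`.  For `v ≠ w` this is the
number of edges joining `v` and `w`; for `v = w` it is twice the number of
loops at `v`. -/
def numDarts (v w : Z.V) : ℕ :=
  (Finset.univ.filter fun d : Z.D => Z.tail d = v ∧ Z.head d = w).card

/-- the number of loops at a vertex -/
def numLoops (v : Z.V) : ℕ := Z.numDarts v v / 2

/-- the number of edges between two (distinct) vertices -/
def numEdgesBetween (v w : Z.V) : ℕ := Z.numDarts v w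

def Adj (v w : Z.V) : Prop := ∃ d : Z.D, Z.tail d = v ∧ Z.head d = w

/-- a multigraph is connected if it is nonempty and any two vertices are
joined by a path -/
def Connected : Prop := Nonempty Z.V ∧ ∀ v w : Z.V, Relation.ReflTransGen Z.Adj v w

/-- no vertices of degree one -/
def NoDegreeOne : Prop := ∀ v : Z.V, Z.degree v ≠ 1

/-- adjacency using only darts from `T` -/
def AdjOn (T : Finset Z.D) (v w : Z.V) : Prop := ∃ d ∈ T, Z.tail d = v ∧ Z.head d = w

/-- A spanning tree, described by its (inv-closed) set of darts: it is
connected, spans all vertices, and has `|V| - 1` edges (i.e. `2(|V|-1)`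
darts); a connected spanning subgraph with `|V| - 1` edges is exactly a
spanning tree. -/
def IsSpanningTree (T : Finset Z.D) : Prop :=
  (∀ d ∈ T, Z.inv d ∈ T) ∧ (∀ v w : Z.V, Relation.ReflTransGen (Z.AdjOn T) v w) ∧
    T.card = 2 * (Fintype.card Z.V - 1)

/-- `κ_Z`, the number of spanning trees of `Z` -/
noncomputable def kappa : ℕ := Nat.card {T : Finset Z.D // Z.IsSpanningTree T}

/-- the adjacency matrix: the diagonal entry at `v` is twice the number of
loops at `v`, the off-diagonal entry at `(v, w)` is the number of edges
joining `v` and `w` -/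
def adjMatrix : Matrix Z.V Z.V ℤ := Matrix.of fun v w => (Z.numDarts v w : ℤ)

/-- the diagonal degree matrix -/
def degMatrix : Matrix Z.V Z.V ℤ := Matrix.diagonal fun v => (Z.degree v : ℤ)

/-- `r_Z = |E_Z| - |V_Z| + 1` -/
def r : ℕ := Z.numEdges + 1 - Fintype.card Z.V

/-- the reciprocal `ζ_Z(u)⁻¹` of the Ihara zeta function, defined through the
three-term determinant formula
`ζ_Z(u)⁻¹ = (1 - u²)^(r-1) · det (I - A u + (D - I) u²)`;
it is a polynomial in `u`. -/
noncomputable def zetaInv : Polynomial ℚ :=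
  (1 - Polynomial.X ^ 2) ^ (Z.r - 1) *
    Matrix.det
      ((1 : Matrix Z.V Z.V (Polynomial ℚ)) -
        (Polynomial.X : Polynomial ℚ) • Z.adjMatrix.map (fun a => (a : Polynomial ℚ)) +
        ((Polynomial.X : Polynomial ℚ) ^ 2) • (Z.degMatrix - 1).map (fun a => (a : Polynomial ℚ)))

/-- `ρ_w(w₀)`: the Laplacian entries -/
def rho (w w0 : Z.V) : ℤ :=
  if w = w0 then (Z.degree w0 : ℤ) - 2 * (Z.numLoops w0 : ℤ)
  else -(Z.numEdgesBetween w w0 : ℤ)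

/-- the divisor `φ(w₀) = ∑_w ρ_w(w₀) · w` -/
noncomputable def lapDiv (w0 : Z.V) : Z.V →₀ ℤ :=
  ∑ w : Z.V, Finsupp.single w (Z.rho w w0)

/-- the Laplacian map `φ : Div(Z) → Div(Z)`, on `Div(Z) = Z.V →₀ ℤ`,
sending `w₀` to `∑_w ρ_w(w₀) · w` -/
noncomputable def lap : (Z.V →₀ ℤ) →ₗ[ℤ] Z.V →₀ ℤ :=
  Finsupp.lsum ℤ fun w0 => LinearMap.toSpanSingleton ℤ _ (Z.lapDiv w0)

/-- the degree map `deg : Div(Z) → ℤ` -/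
noncomputable def divDeg : (Z.V →₀ ℤ) →ₗ[ℤ] ℤ :=
  Finsupp.lsum ℤ fun _ => (LinearMap.id : ℤ →ₗ[ℤ] ℤ)

/-- `Div⁰(Z)`, the divisors of degree zero -/
noncomputable def divZero : Submodule ℤ (Z.V →₀ ℤ) := LinearMap.ker Z.divDeg

/-- `Pr(Z)`, the principal divisors: the image of the Laplacian map -/
noncomputable def prin : Submodule ℤ (Z.V →₀ ℤ) := LinearMap.range Z.lap

end Multigraph

/-- A covering map of multigraphs: maps on vertices and darts commuting with
the structure maps which are local isomorphisms (bijections on stars). -/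
structure CoveringMap (Y X : Multigraph) where
  vmap : Y.V → X.V
  dmap : Y.D → X.D
  head_map : ∀ d, X.head (dmap d) = vmap (Y.head d)
  inv_map : ∀ d, X.inv (dmap d) = dmap (Y.inv d)
  vmap_surj : Function.Surjective vmap
  star_bij : ∀ w : Y.V, Set.BijOn dmap {d | Y.head d = w} {d | X.head d = vmap w}

/-- A Galois (regular) cover of multigraphs `Y/X` with automorphism group `G`:
a covering map together with an action of `G` on `Y` by automorphisms of the
cover which is free and transitive on each vertex fiber (so `G` is identified
with the deck transformation group `Aut(Y/X)`). -/
structure GaloisCover (Y X : Multigraph) (G : Type) [Group G] extends CoveringMap Y X where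
  actV : G →* Equiv.Perm Y.V
  actD : G →* Equiv.Perm Y.D
  act_head : ∀ g d, Y.head (actD g d) = actV g (Y.head d)
  act_inv : ∀ g d, Y.inv (actD g d) = actD g (Y.inv d)
  vmap_act : ∀ g w, vmap (actV g w) = vmap w
  dmap_act : ∀ g d, dmap (actD g d) = dmap d
  act_free : ∀ g w, actV g w = w → g = 1
  fiber_trans : ∀ w w' : Y.V, vmap w = vmap w' → ∃ g : G, actV g w = w'

/-- the first non-vanishing Taylor coefficient of a polynomial `p` at `u = 1` -/
noncomputable def leadingCoeffAtOne {K : Type} [Field K] (p : Polynomial K) : K :=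
  (Polynomial.taylor 1 p).coeff (p.rootMultiplicity 1)

/-- the idempotent `e_χ = |G|⁻¹ ∑_σ χ(σ) σ⁻¹` of `ℂ[G]` attached to a
character `χ` of a finite abelian group `G` -/
noncomputable def charIdem {G : Type} [CommGroup G] [Fintype G] (χ : G →* ℂ) :
    MonoidAlgebra ℂ G :=
  (Fintype.card G : ℂ)⁻¹ • ∑ σ : G, χ σ • MonoidAlgebra.single σ⁻¹ (1 : ℂ)

/-- the complex-conjugate character `χ̄` -/
noncomputable def conjChar {G : Type} [CommGroup G] (χ : G →* ℂ) : G →* ℂ :=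
  (starRingEnd ℂ).toMonoidHom.comp χ

/-- `e = 1 - e_{χ₁}` where `χ₁` is the trivial character -/
noncomputable def eAug (G : Type) [CommGroup G] [Fintype G] : MonoidAlgebra ℂ G :=
  1 - charIdem (1 : G →* ℂ)

/-- the augmentation ideal `I_G = ker(s : ℤ[G] → ℤ)`, as an additive
subgroup of `ℤ[G]` -/
noncomputable def augIdeal (G : Type) [CommGroup G] : AddSubgroup (MonoidAlgebra ℤ G) :=
  AddMonoidHom.ker
    (((Finsupp.lsum ℤ fun _ : G => (LinearMap.id : ℤ →ₗ[ℤ] ℤ)).toAddMonoidHom.comp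
      (MonoidAlgebra.coeffAddEquiv : MonoidAlgebra ℤ G ≃+ (G →₀ ℤ)).toAddMonoidHom :
      MonoidAlgebra ℤ G →+ ℤ))

namespace GaloisCover

variable {Y X : Multigraph} {G : Type} [CommGroup G] [Fintype G] (C : GaloisCover Y X G)

/-- the matrix `A(σ)`, relative to a choice `s` of one vertex `s v` of `Y` in
the fiber of each vertex `v` of `X`: its `(v, v')` entry is twice the number
of loops at `s v` when `v = v'` and `σ = 1`, and otherwise the number of
edges connecting `s v` to `σ · s v'`. -/
noncomputable def Asigma (s : X.V → Y.V) (σ : G) : Matrix X.V X.V ℤ :=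
  Matrix.of fun v v' => (Y.numDarts (s v) (C.actV σ (s v')) : ℤ)

/-- `A_χ = ∑_σ χ(σ) A(σ)` -/
noncomputable def Achi (s : X.V → Y.V) (χ : G →* ℂ) : Matrix X.V X.V ℂ :=
  ∑ σ : G, χ σ • (C.Asigma s σ).map fun a => (a : ℂ)

/-- the reciprocal `L_{Y/X}(u,χ)⁻¹` of the Artin-Ihara L-function, defined
through the three-term determinant formula
`L_{Y/X}(u,χ)⁻¹ = (1 - u²)^(r_X - 1) · det (I - A_χ u + (D - I) u²)`. -/
noncomputable def LInv (s : X.V → Y.V) (χ : G →* ℂ) : Polynomial ℂ :=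
  (1 - Polynomial.X ^ 2) ^ (X.r - 1) *
    Matrix.det
      ((1 : Matrix X.V X.V (Polynomial ℂ)) -
        (Polynomial.X : Polynomial ℂ) • (C.Achi s χ).map Polynomial.C +
        ((Polynomial.X : Polynomial ℂ) ^ 2) • (X.degMatrix - 1).map fun a => (a : Polynomial ℂ))

/-- `θ*_{Y/X}(1) = ∑_χ L*_{Y/X}(1,χ) e_{χ̄} ∈ ℂ[G]` (a finite sum over all
the characters of `G`) -/
noncomputable def thetaStar (s : X.V → Y.V) : MonoidAlgebra ℂ G :=
  ∑ᶠ χ : G →* ℂ, leadingCoeffAtOne (C.LInv s χ) • charIdem (conjChar χ)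

/-- `ℓ_{w_i} : Div(Y) → ℤ[G]`, on a vertex `w`: `∑_σ ρ_{w_i}(σ·w) σ⁻¹`
(here `w_i = s v`) -/
noncomputable def ell (s : X.V → Y.V) (v : X.V) (w : Y.V) : MonoidAlgebra ℤ G :=
  ∑ σ : G, Y.rho (s v) (C.actV σ w) • MonoidAlgebra.single (σ⁻¹ : G) (1 : ℤ)

/-- the `ℤ[G]`-linear extension of `ell` to `Div(Y)` -/
noncomputable def ellD (s : X.V → Y.V) (v : X.V) (Dv : Y.V →₀ ℤ) : MonoidAlgebra ℤ G :=
  Finsupp.sum Dv fun w c => c • C.ell s v w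

/-- `det_{ℤ[G]}(φ)`: the determinant of the `ℤ[G]`-linear Laplacian `φ` on the
free `ℤ[G]`-module `Div(Y) = ⊕ᵢ ℤ[G]·wᵢ`, computed in the basis `(wᵢ)ᵢ`,
i.e. the determinant of the matrix `(ℓ_{w_i}(w_j))_{i,j}`. -/
noncomputable def lapDet (s : X.V → Y.V) : MonoidAlgebra ℤ G :=
  Matrix.det (Matrix.of fun v v' => C.ell s v (s v'))

/-- the action of an element of `ℤ[G]` on `Div(Y)` -/
noncomputable def smulDiv (x : MonoidAlgebra ℤ G) (Dv : Y.V →₀ ℤ) : Y.V →₀ ℤ :=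
  Finsupp.sum x.coeff fun σ c => c • Finsupp.mapDomain (C.actV σ) Dv

/-- the action of an element of `ℂ[G]` on `Div(Y) ⊗ ℂ` -/
noncomputable def smulDivC (x : MonoidAlgebra ℂ G) (Dv : Y.V →₀ ℂ) : Y.V →₀ ℂ :=
  Finsupp.sum x.coeff fun σ c => c • Finsupp.mapDomain (C.actV σ) Dv

/-- `res : Div(Y) → Div(X)`, sending a vertex `w` to `π(w)` -/
noncomputable def res (Dv : Y.V →₀ ℤ) : X.V →₀ ℤ := Finsupp.mapDomain C.vmap Dv

/-- `cor : Div(X) → Div(Y)`, sending a vertex `v` to `∑_{w ∈ π⁻¹(v)} w` -/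
noncomputable def cor (Dv : X.V →₀ ℤ) : Y.V →₀ ℤ :=
  Finsupp.equivFunOnFinite.symm fun w => Dv (C.vmap w)

/-- the norm element `N_G = ∑_σ σ` acting on `Div(Y)` -/
noncomputable def normMap : (Y.V →₀ ℤ) →ₗ[ℤ] Y.V →₀ ℤ :=
  ∑ σ : G, Finsupp.lmapDomain ℤ ℤ (C.actV σ)

end GaloisCover

/-- An intermediate cover of a Galois cover `Y/X`, corresponding to a subgroup
`H ≤ G = Aut(Y/X)`: a multigraph `Z` (the quotient `Y/H`) which is at the
same time a Galois cover of which `Y` is a Galois `H`-cover (with the action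
of `H` being the restriction of that of `G`) and a cover of `X`, compatibly
with the covering `Y → X`. -/
structure IntermediateCover {Y X : Multigraph} {G : Type} [Group G]
    (C : GaloisCover Y X G) (H : Subgroup G) where
  Z : Multigraph
  upper : GaloisCover Y Z ↥H
  lower : CoveringMap Z X
  actV_compat : ∀ (h : ↥H) (w : Y.V), upper.actV h w = C.actV (h : G) w
  actD_compat : ∀ (h : ↥H) (d : Y.D), upper.actD h d = C.actD (h : G) d
  vmap_compat : ∀ w : Y.V, lower.vmap (upper.vmap w) = C.vmap w
  dmap_compat : ∀ d : Y.D, lower.dmap (upper.dmap d) = C.dmap d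


namespace LVan
open Finset
set_option linter.unusedSectionVars false

variable {Y X : Multigraph} {G : Type} [CommGroup G] [Fintype G] (C : GaloisCover Y X G)
  (s : X.V → Y.V)

lemma actV_mul (σ τ : G) (w : Y.V) : C.actV (σ * τ) w = C.actV σ (C.actV τ w) := by
  rw [map_mul]; rfl

lemma act_tail (g : G) (d : Y.D) : Y.tail (C.actD g d) = C.actV g (Y.tail d) := by
  unfold Multigraph.tail
  rw [C.act_inv, C.act_head]

lemma e_bijective (hs : ∀ v, C.vmap (s v) = v) :
    Function.Bijective (fun p : G × X.V => C.actV p.1 (s p.2)) := by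
  constructor
  · rintro ⟨σ, v⟩ ⟨τ, v'⟩ h
    simp only at h
    have hv : v = v' := by
      have h2 := congrArg C.vmap h
      rwa [C.vmap_act, C.vmap_act, hs, hs] at h2
    subst hv
    have h3 : C.actV (τ⁻¹ * σ) (s v) = s v := by
      rw [actV_mul, h, ← actV_mul, inv_mul_cancel, map_one]; rfl
    have h4 : τ⁻¹ * σ = 1 := C.act_free _ _ h3
    have h5 : σ = τ := (inv_mul_eq_one.mp h4).symm
    rw [h5]
  · intro w
    obtain ⟨g, hg⟩ := C.fiber_trans (s (C.vmap w)) w (by rw [hs])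
    exact ⟨(g, C.vmap w), hg⟩

lemma degree_vmap (w : Y.V) : Y.degree w = X.degree (C.vmap w) := by
  rw [Multigraph.degree, Multigraph.degree, ← Fintype.card_subtype, ← Fintype.card_subtype]
  exact Fintype.card_congr (Set.BijOn.equiv _ (C.star_bij w))

end LVan

namespace LVan
open Finset
set_option linter.unusedSectionVars false
set_option maxHeartbeats 1000000

variable {Y X : Multigraph} {G : Type} [CommGroup G] [Fintype G] (C : GaloisCover Y X G)
  (s : X.V → Y.V)

lemma det_sub_ne_zero (hs : ∀ v, C.vmap (s v) = v) (hYconn : Y.Connected)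
    (χ : G →* ℂ) (hχ : χ ≠ 1) :
    (X.degMatrix.map (fun a : ℤ => (a : ℂ)) - C.Achi s χ).det ≠ 0 := by
  intro hdet
  obtain ⟨x, hx, hxe⟩ := Matrix.exists_mulVec_eq_zero_iff.mpr hdet
  set e : G × X.V ≃ Y.V := Equiv.ofBijective _ (e_bijective C s hs) with he
  have he2 : ∀ p : G × X.V, e p = C.actV p.1 (s p.2) := fun p => rfl
  set f : Y.V → ℂ := fun w => χ (e.symm w).1 * x (e.symm w).2 with hf
  have f_spec : ∀ (σ : G) (v : X.V), f (C.actV σ (s v)) = χ σ * x v := by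
    intro σ v
    have h1 : e.symm (C.actV σ (s v)) = (σ, v) := by
      rw [← he2 (σ, v)]; exact e.symm_apply_apply _
    simp only [hf, h1]
  have f_equiv : ∀ (τ : G) (w : Y.V), f (C.actV τ w) = χ τ * f w := by
    intro τ w
    obtain ⟨p, rfl⟩ := e.surjective w
    rw [he2, ← actV_mul, f_spec, f_spec, map_mul, mul_assoc]
  -- the equation (D - A_χ) x = 0, entrywise
  have hmv : ∀ v, (X.degree v : ℂ) * x v = ∑ v', (C.Achi s χ) v v' * x v' := by
    intro v
    have h0 : (∑ v', ((X.degMatrix.map (fun a : ℤ => (a : ℂ))) v v'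
        - C.Achi s χ v v') * x v') = 0 := by
      simpa [Matrix.mulVec, dotProduct, Matrix.sub_apply] using congrFun hxe v
    simp only [sub_mul] at h0
    rw [Finset.sum_sub_distrib, sub_eq_zero] at h0
    rw [← h0]
    have hterm : ∀ v' : X.V, (X.degMatrix.map (fun a : ℤ => (a : ℂ))) v v' * x v'
        = if v = v' then (X.degree v : ℂ) * x v' else 0 := by
      intro v'
      simp [Multigraph.degMatrix, Matrix.map_apply, Matrix.diagonal_apply,
        apply_ite (fun z : ℤ => (z : ℂ)), ite_mul]
    rw [Finset.sum_congr rfl (fun v' _ => hterm v'), Finset.sum_ite_eq]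
    simp
  have hA : ∀ v v', C.Achi s χ v v' = ∑ σ : G, χ σ * (Y.numDarts (s v) (C.actV σ (s v')) : ℂ) := by
    intro v v'
    rw [GaloisCover.Achi, Matrix.sum_apply]
    apply Finset.sum_congr rfl
    intro σ _
    simp [GaloisCover.Asigma, Matrix.map_apply, smul_eq_mul]
  -- key combinatorial identity
  have key : ∀ v, (∑ d : Y.D, if Y.tail d = s v then f (Y.head d) else 0)
      = ∑ p : G × X.V, (Y.numDarts (s v) (C.actV p.1 (s p.2)) : ℂ) * (χ p.1 * x p.2) := by
    intro v
    have step1 : ∀ d : Y.D,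
        (if Y.tail d = s v then f (Y.head d) else 0)
          = ∑ p : G × X.V, if Y.tail d = s v ∧ Y.head d = C.actV p.1 (s p.2)
              then χ p.1 * x p.2 else 0 := by
      intro d
      by_cases h : Y.tail d = s v
      · simp only [h, true_and, if_true]
        rw [← Equiv.sum_comp e.symm (fun p : G × X.V =>
          if Y.head d = C.actV p.1 (s p.2) then χ p.1 * x p.2 else 0)]
        have hcong : ∀ w : Y.V,
            (if Y.head d = C.actV (e.symm w).1 (s (e.symm w).2)
              then χ (e.symm w).1 * x (e.symm w).2 else 0)
            = if Y.head d = w then f w else 0 := by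
          intro w
          have hw : C.actV (e.symm w).1 (s (e.symm w).2) = w := by
            rw [← he2]; exact e.apply_symm_apply w
          rw [hw, hf]
        rw [Finset.sum_congr rfl (fun w _ => hcong w), Finset.sum_ite_eq]
        simp
      · simp [h]
    rw [Finset.sum_congr rfl (fun d _ => step1 d), Finset.sum_comm]
    apply Finset.sum_congr rfl
    intro p _
    rw [← Finset.sum_filter, Finset.sum_const, Multigraph.numDarts]
    simp [nsmul_eq_mul]
  -- harmonicity at base points
  have harm0 : ∀ v : X.V, (∑ d : Y.D, if Y.tail d = s v then f (Y.head d) else 0)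
      = (X.degree v : ℂ) * x v := by
    intro v
    rw [key v, hmv v]
    rw [Fintype.sum_prod_type, Finset.sum_comm]
    apply Finset.sum_congr rfl
    intro v' _
    rw [hA, Finset.sum_mul]
    apply Finset.sum_congr rfl
    intro σ _
    ring
  -- equivariance of the "sum over star" operator
  have S_equiv : ∀ (τ : G) (u : Y.V),
      (∑ d : Y.D, if Y.tail d = C.actV τ u then f (Y.head d) else 0)
        = χ τ * ∑ d : Y.D, if Y.tail d = u then f (Y.head d) else 0 := by
    intro τ u
    rw [← Equiv.sum_comp (C.actD τ) (fun d => if Y.tail d = C.actV τ u then f (Y.head d) else 0),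
      Finset.mul_sum]
    apply Finset.sum_congr rfl
    intro d _
    rw [act_tail, C.act_head, f_equiv]
    by_cases h : Y.tail d = u
    · rw [if_pos (by rw [h]), if_pos h]
    · rw [if_neg (fun hc => h ((C.actV τ).injective hc)), if_neg h, mul_zero]
  -- harmonicity everywhere
  have harm : ∀ w : Y.V, (∑ d : Y.D, if Y.tail d = w then f (Y.head d) else 0)
      = (Y.degree w : ℂ) * f w := by
    intro w
    obtain ⟨p, rfl⟩ := e.surjective w
    rw [he2, S_equiv, harm0, f_spec]
    have hd : Y.degree (C.actV p.1 (s p.2)) = X.degree p.2 := by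
      rw [degree_vmap C, C.vmap_act, hs]
    rw [hd]; ring
  -- conjugate function
  set g : Y.V → ℂ := fun w => (starRingEnd ℂ) (f w) with hg
  have harmg : ∀ w : Y.V, (∑ d : Y.D, if Y.tail d = w then g (Y.head d) else 0)
      = (Y.degree w : ℂ) * g w := by
    intro w
    have h1 : (∑ d : Y.D, if Y.tail d = w then g (Y.head d) else 0)
        = (starRingEnd ℂ) (∑ d : Y.D, if Y.tail d = w then f (Y.head d) else 0) := by
      rw [map_sum]
      apply Finset.sum_congr rfl
      intro d _
      rw [apply_ite (starRingEnd ℂ), map_zero, hg]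
    rw [h1, harm w, map_mul, map_natCast, hg]
  -- the involution on darts
  set invE : Equiv.Perm Y.D := Function.Involutive.toPerm Y.inv Y.inv_inv with hinvE
  have headinv : ∀ d, Y.head (Y.inv d) = Y.tail d := fun d => rfl
  have tailinv : ∀ d, Y.tail (Y.inv d) = Y.head d := fun d => by
    rw [Multigraph.tail, Y.inv_inv]
  -- grouping sums by head / tail
  have sum_head : ∀ F : Y.V → ℂ, (∑ d : Y.D, F (Y.head d))
      = ∑ w : Y.V, (Y.degree w : ℂ) * F w := by
    intro F
    rw [← Finset.sum_fiberwise Finset.univ Y.head (fun d => F (Y.head d))]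
    apply Finset.sum_congr rfl
    intro w _
    rw [Finset.sum_congr rfl (fun d hd => by rw [(Finset.mem_filter.mp hd).2]),
      Finset.sum_const, Multigraph.degree]
    simp [nsmul_eq_mul]
  have sum_tail_pair : (∑ d : Y.D, f (Y.tail d) * g (Y.head d))
      = ∑ w : Y.V, (Y.degree w : ℂ) * (f w * g w) := by
    rw [← Finset.sum_fiberwise Finset.univ Y.tail (fun d => f (Y.tail d) * g (Y.head d))]
    apply Finset.sum_congr rfl
    intro w _
    calc (∑ d ∈ Finset.univ.filter fun d => Y.tail d = w, f (Y.tail d) * g (Y.head d))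
        = f w * ∑ d ∈ Finset.univ.filter fun d => Y.tail d = w, g (Y.head d) := by
          rw [Finset.mul_sum]
          exact Finset.sum_congr rfl fun d hd => by rw [(Finset.mem_filter.mp hd).2]
      _ = f w * ((Y.degree w : ℂ) * g w) := by rw [Finset.sum_filter, harmg w]
      _ = (Y.degree w : ℂ) * (f w * g w) := by ring
  -- the quadratic form vanishes
  have main0 : (∑ d : Y.D, (f (Y.head d) - f (Y.tail d)) * (g (Y.head d) - g (Y.tail d))) = 0 := by
    have expand : ∀ d : Y.D, (f (Y.head d) - f (Y.tail d)) * (g (Y.head d) - g (Y.tail d))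
        = f (Y.head d) * g (Y.head d) + f (Y.tail d) * g (Y.tail d)
          - (f (Y.head d) * g (Y.tail d) + f (Y.tail d) * g (Y.head d)) := fun d => by ring
    rw [Finset.sum_congr rfl (fun d _ => expand d), Finset.sum_sub_distrib,
      Finset.sum_add_distrib, Finset.sum_add_distrib]
    have h1 : (∑ d : Y.D, f (Y.tail d) * g (Y.tail d))
        = ∑ d : Y.D, f (Y.head d) * g (Y.head d) := by
      rw [← Equiv.sum_comp invE (fun d => f (Y.head d) * g (Y.head d))]
      exact Finset.sum_congr rfl fun d _ => by
        rw [show Y.head (invE d) = Y.tail d from headinv d]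
    have h2 : (∑ d : Y.D, f (Y.head d) * g (Y.tail d))
        = ∑ d : Y.D, f (Y.tail d) * g (Y.head d) := by
      rw [← Equiv.sum_comp invE (fun d => f (Y.tail d) * g (Y.head d))]
      exact Finset.sum_congr rfl fun d _ => by
        rw [show Y.head (invE d) = Y.tail d from headinv d,
          show Y.tail (invE d) = Y.head d from tailinv d, mul_comm]
    have h3 : (∑ d : Y.D, f (Y.head d) * g (Y.head d))
        = ∑ w : Y.V, (Y.degree w : ℂ) * (f w * g w) := sum_head (fun w => f w * g w)
    rw [h1, h2, h3, sum_tail_pair]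
    ring
  -- each dart has equal endpoints values
  have eachzero : ∀ d : Y.D, f (Y.head d) = f (Y.tail d) := by
    have hre : (∑ d : Y.D, Complex.normSq (f (Y.head d) - f (Y.tail d))) = 0 := by
      have hcast : ((∑ d : Y.D, Complex.normSq (f (Y.head d) - f (Y.tail d)) : ℝ) : ℂ) = 0 := by
        push_cast
        rw [← main0]
        apply Finset.sum_congr rfl
        intro d _
        rw [show g (Y.head d) - g (Y.tail d)
            = (starRingEnd ℂ) (f (Y.head d) - f (Y.tail d)) by rw [hg, map_sub]]
        exact (Complex.mul_conj _).symm
      exact_mod_cast hcast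
    intro d
    have h1 := (Finset.sum_eq_zero_iff_of_nonneg
      (fun d _ => Complex.normSq_nonneg _)).mp hre d (Finset.mem_univ d)
    have h2 := Complex.normSq_eq_zero.mp h1
    exact sub_eq_zero.mp h2
  -- f is constant by connectivity
  have fconst : ∀ a b : Y.V, f a = f b := by
    have hadj : ∀ u w : Y.V, Y.Adj u w → f u = f w := by
      rintro u w ⟨d, hdt, hdh⟩
      rw [← hdt, ← hdh]
      exact (eachzero d).symm
    intro a b
    have hab := hYconn.2 a b
    induction hab with
    | refl => rfl
    | tail h1 h2 ih => exact ih.trans (hadj _ _ h2)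
  -- conclude x = 0
  obtain ⟨σ₀, hσ₀⟩ : ∃ σ : G, χ σ ≠ 1 := by
    by_contra h
    push_neg at h
    exact hχ (MonoidHom.ext fun σ => by rw [h σ]; rfl)
  apply hx
  funext v
  have h1 : f (C.actV σ₀ (s v)) = χ σ₀ * x v := f_spec σ₀ v
  have h3 : f (s v) = x v := by
    have hone : C.actV (1 : G) (s v) = s v := by rw [map_one]; rfl
    have h4 := f_spec 1 v
    rw [hone, map_one, one_mul] at h4
    exact h4
  have h5 : χ σ₀ * x v = x v := by rw [← h1, fconst (C.actV σ₀ (s v)) (s v), h3]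
  have h6 : (χ σ₀ - 1) * x v = 0 := by rw [sub_mul, one_mul, h5, sub_self]
  rcases mul_eq_zero.mp h6 with h7 | h7
  · exact absurd (sub_eq_zero.mp h7) hσ₀
  · exact h7

end LVan


/-- For an abelian cover `Y/X` of multigraphs with
automorphism group `G` and any non-trivial character `χ` of `G`, the order of
vanishing of `L_{Y/X}(u,χ)⁻¹` at `u = 1` equals `r_X - 1`. -/
theorem L_function_order_of_vanishing (X Y : Multigraph)
    (hXconn : X.Connected) (hXdeg : X.NoDegreeOne)
    (hYconn : Y.Connected) (hYdeg : Y.NoDegreeOne)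
    {G : Type} [CommGroup G] [Fintype G] (C : GaloisCover Y X G)
    (s : X.V → Y.V) (hs : ∀ v, C.vmap (s v) = v)
    (χ : G →* ℂ) (hχ : χ ≠ 1) :
    (C.LInv s χ).rootMultiplicity 1 = X.r - 1 := by
  classical
  have hdet := LVan.det_sub_ne_zero C s hs hYconn χ hχ
  rw [GaloisCover.LInv]
  set Pm : Matrix X.V X.V (Polynomial ℂ) :=
    ((1 : Matrix X.V X.V (Polynomial ℂ)) -
      (Polynomial.X : Polynomial ℂ) • (C.Achi s χ).map Polynomial.C +
      ((Polynomial.X : Polynomial ℂ) ^ 2) •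
        (X.degMatrix - 1).map fun a => (a : Polynomial ℂ)) with hPm
  have heval : Polynomial.eval 1 Pm.det
      = (X.degMatrix.map (fun a : ℤ => (a : ℂ)) - C.Achi s χ).det := by
    have h1 : Polynomial.eval 1 Pm.det = (Polynomial.evalRingHom (1 : ℂ)) Pm.det := rfl
    rw [h1, RingHom.map_det]
    congr 1
    ext v v'
    simp only [hPm, RingHom.mapMatrix_apply, Matrix.map_apply, Matrix.add_apply,
      Matrix.sub_apply, Matrix.smul_apply, Matrix.one_apply, Matrix.map_apply,
      smul_eq_mul, Polynomial.coe_evalRingHom, Polynomial.eval_add, Polynomial.eval_sub,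
      Polynomial.eval_mul, Polynomial.eval_pow, Polynomial.eval_X, Polynomial.eval_C,
      Polynomial.eval_one, Polynomial.eval_intCast]
    by_cases h : v = v' <;> simp [h, Multigraph.degMatrix, Matrix.diagonal_apply,
      Matrix.one_apply] <;> push_cast <;> ring
  have hdet1 : Polynomial.eval 1 Pm.det ≠ 0 := by rw [heval]; exact hdet
  have hPmdet_ne : Pm.det ≠ 0 := fun h => hdet1 (by rw [h, Polynomial.eval_zero])
  have hq_ne : ((1 : Polynomial ℂ) - Polynomial.X ^ 2) ^ (X.r - 1) ≠ 0 := by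
    apply pow_ne_zero
    intro h
    have h2 := congrArg (Polynomial.eval 0) h
    simp at h2
  rw [Polynomial.rootMultiplicity_mul (mul_ne_zero hq_ne hPmdet_ne),
    Polynomial.rootMultiplicity_eq_zero (fun h => hdet1 h), add_zero]
  have h3 : ((1 : Polynomial ℂ) - Polynomial.X ^ 2) ^ (X.r - 1)
      = (Polynomial.X - Polynomial.C (1 : ℂ)) ^ (X.r - 1)
        * (-(Polynomial.X + 1)) ^ (X.r - 1) := by
    rw [← mul_pow]
    congr 1
    rw [Polynomial.C_1]
    ring
  have hneg_ne : ((-(Polynomial.X + 1) : Polynomial ℂ)) ^ (X.r - 1) ≠ 0 := by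
    apply pow_ne_zero
    intro h
    have h2 := congrArg (Polynomial.eval 0) h
    simp at h2
  have hnotroot : ¬ (((-(Polynomial.X + 1) : Polynomial ℂ)) ^ (X.r - 1)).IsRoot 1 := by
    simp only [Polynomial.IsRoot, Polynomial.eval_pow, Polynomial.eval_neg,
      Polynomial.eval_add, Polynomial.eval_X, Polynomial.eval_one]
    intro h
    have h2 : ((-2 : ℂ)) ^ (X.r - 1) ≠ 0 := pow_ne_zero _ (by norm_num)
    apply h2
    convert h using 2
    norm_num
  rw [h3, Polynomial.rootMultiplicity_mul (by rw [← h3]; exact hq_ne),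
    Polynomial.rootMultiplicity_X_sub_C_pow,
    Polynomial.rootMultiplicity_eq_zero hnotroot, add_zero]
end

section
/- Let Y/X be an abelian cover of multigraphs with automorphism group G. Then (−2)^{r_X − 1} · det_{Z[G]}(φ) = θ*_{Y/X}(1) · e in Z[G], where e = 1 − e_{χ_1}, det_{Z[G]}(φ) is the determinant of the Z[G]-linear Laplacian φ on the free Z[G]-module Div(Y), and r_X = |E_X| − |V_X| + 1. -/
/-! ### Part A: character theory for finite abelian groups -/

section CharLemmas

variable {G : Type} [CommGroup G] [Fintype G]

lemma char_pow_card (ψ : G →* ℂ) (g : G) : ψ g ^ Fintype.card G = 1 := by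
  rw [← map_pow, pow_card_eq_one, map_one]

lemma char_ne_zero (ψ : G →* ℂ) (g : G) : ψ g ≠ 0 := by
  intro h
  have h2 := char_pow_card ψ g
  rw [h, zero_pow Fintype.card_ne_zero] at h2
  exact zero_ne_one h2

lemma char_inv (ψ : G →* ℂ) (g : G) : ψ g⁻¹ = (ψ g)⁻¹ :=
  eq_inv_of_mul_eq_one_left (by rw [← map_mul, inv_mul_cancel, map_one])

lemma char_abs_one (ψ : G →* ℂ) (g : G) : ‖ψ g‖ = 1 := by
  have h : ‖ψ g‖ ^ Fintype.card G = 1 := by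
    rw [← norm_pow, char_pow_card, norm_one]
  have h0 : (0:ℝ) ≤ ‖ψ g‖ := norm_nonneg _
  rcases (pow_eq_one_iff_cases).mp h with h' | h' | h'
  · exact absurd h' Fintype.card_ne_zero
  · exact h'
  · rw [h'.1] at h0
    norm_num at h0

lemma char_conj (ψ : G →* ℂ) (g : G) : (starRingEnd ℂ) (ψ g) = (ψ g)⁻¹ :=
  (Complex.inv_eq_conj (char_abs_one ψ g)).symm

lemma conjChar_apply (χ : G →* ℂ) (g : G) : conjChar χ g = (starRingEnd ℂ) (χ g) := rfl

lemma conjChar_conjChar (χ : G →* ℂ) : conjChar (conjChar χ) = χ := by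
  ext g
  simp [conjChar_apply]

lemma conjChar_one : conjChar (1 : G →* ℂ) = 1 := by
  ext g
  simp [conjChar_apply]

lemma conjChar_eq_one_iff {χ : G →* ℂ} : conjChar χ = 1 ↔ χ = 1 := by
  constructor
  · intro h
    ext g
    have := DFunLike.congr_fun h g
    rw [conjChar_apply] at this
    simpa using congrArg (starRingEnd ℂ) this
  · rintro rfl
    exact conjChar_one

lemma sum_char_eq_zero {χ : G →* ℂ} (hχ : χ ≠ 1) : ∑ g : G, χ g = 0 := by
  obtain ⟨τ, hτ⟩ : ∃ τ, χ τ ≠ 1 := by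
    by_contra h
    push_neg at h
    exact hχ (MonoidHom.ext fun g => (h g).trans rfl)
  have key : χ τ * ∑ g : G, χ g = ∑ g : G, χ g := by
    rw [Finset.mul_sum]
    simp_rw [← map_mul]
    exact Fintype.sum_equiv (Equiv.mulLeft τ) _ _ fun g => rfl
  have : (χ τ - 1) * ∑ g : G, χ g = 0 := by rw [sub_mul, one_mul, key, sub_self]
  rcases mul_eq_zero.mp this with h | h
  · exact absurd (sub_eq_zero.mp h) hτ
  · exact h

/-- bridge to mathlib's `AddChar` theory -/
def charEquivAddChar : (G →* ℂ) ≃ AddChar (Additive G) ℂ where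
  toFun χ :=
    { toFun := fun a => χ a.toMul
      map_zero_eq_one' := map_one χ
      map_add_eq_mul' := fun a b => map_mul χ _ _ }
  invFun ψ :=
    { toFun := fun g => ψ (Additive.ofMul g)
      map_one' := ψ.map_zero_eq_one
      map_mul' := fun a b => ψ.map_add_eq_mul a b }
  left_inv χ := rfl
  right_inv ψ := rfl

noncomputable instance charFintype : Fintype (G →* ℂ) :=
  Fintype.ofEquiv _ (charEquivAddChar (G := G)).symm

open Classical in
lemma sum_chars_apply (τ : G) :
    ∑ ψ : G →* ℂ, ψ τ = if τ = 1 then (Fintype.card G : ℂ) else 0 := by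
  classical
  have h := AddChar.sum_apply_eq_ite (α := Additive G) (Additive.ofMul τ)
  rw [← Equiv.sum_comp (charEquivAddChar (G := G))
    (fun ψ : AddChar (Additive G) ℂ => ψ (Additive.ofMul τ))] at h
  simpa [charEquivAddChar] using h

lemma card_mul_coeff (k : Type) [CommSemiring k] [Algebra k ℂ]
    (a : MonoidAlgebra k G) (g : G) :
    (Fintype.card G : ℂ) * algebraMap k ℂ (a.coeff g) =
      ∑ ψ : G →* ℂ, (MonoidAlgebra.lift k ℂ G ψ a) * ψ g⁻¹ := by
  classical
  symm
  have hlift : ∀ ψ : G →* ℂ,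
      MonoidAlgebra.lift k ℂ G ψ a = ∑ σ : G, algebraMap k ℂ (a.coeff σ) * ψ σ := by
    intro ψ
    rw [MonoidAlgebra.lift_apply, Finsupp.sum_fintype]
    · exact Finset.sum_congr rfl fun σ _ => Algebra.smul_def _ _
    · intro σ; simp
  calc ∑ ψ : G →* ℂ, (MonoidAlgebra.lift k ℂ G ψ a) * ψ g⁻¹
      = ∑ ψ : G →* ℂ, ∑ σ : G, algebraMap k ℂ (a.coeff σ) * ψ (σ * g⁻¹) := by
        refine Finset.sum_congr rfl fun ψ _ => ?_
        rw [hlift ψ, Finset.sum_mul]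
        exact Finset.sum_congr rfl fun σ _ => by rw [map_mul, mul_assoc]
    _ = ∑ σ : G, algebraMap k ℂ (a.coeff σ) * ∑ ψ : G →* ℂ, ψ (σ * g⁻¹) := by
        rw [Finset.sum_comm]
        exact Finset.sum_congr rfl fun σ _ => (Finset.mul_sum _ _ _).symm
    _ = (Fintype.card G : ℂ) * algebraMap k ℂ (a.coeff g) := by
        simp_rw [sum_chars_apply, mul_inv_eq_one, mul_ite, mul_zero]
        rw [Finset.sum_ite_eq' Finset.univ g]
        simp [mul_comm]

end CharLemmas
/-! ### Part B: multigraph and cover lemmas -/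

lemma even_card_of_involution {α : Type} [DecidableEq α] (S : Finset α) (i : α → α)
    (h1 : ∀ a ∈ S, i a ∈ S) (h2 : ∀ a ∈ S, i (i a) = a) (h3 : ∀ a ∈ S, i a ≠ a) :
    Even S.card := by
  induction S using Finset.strongInduction with
  | _ S ih =>
    rcases S.eq_empty_or_nonempty with rfl | ⟨a, ha⟩
    · simp
    · have hia : i a ∈ S := h1 a ha
      have hne : i a ≠ a := h3 a ha
      have hia' : i a ∈ S.erase a := Finset.mem_erase.mpr ⟨hne, hia⟩
      set S' := (S.erase a).erase (i a) with hS'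
      have hmem : ∀ b, b ∈ S' ↔ b ∈ S ∧ b ≠ a ∧ b ≠ i a := by
        intro b
        simp only [hS', Finset.mem_erase]
        tauto
      have hsub' : S' ⊆ S := fun b hb => ((hmem b).mp hb).1
      have hsub : S' ⊂ S := (Finset.ssubset_iff_of_subset hsub').mpr
        ⟨a, ha, fun hc => (((hmem a).mp hc).2.1 rfl)⟩
      have hE : Even S'.card := by
        refine ih S' hsub (fun b hb => ?_) (fun b hb => h2 b (hsub' hb))
          (fun b hb => h3 b (hsub' hb))
        rcases (hmem b).mp hb with ⟨hbS, hba, hbia⟩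
        refine (hmem (i b)).mpr ⟨h1 b hbS, fun hc => hbia ?_, fun hc => hba ?_⟩
        · exact (h2 b hbS).symm.trans (congrArg i hc)
        · exact (h2 b hbS).symm.trans ((congrArg i hc).trans (h2 a ha))
      have c1 : (S.erase a).card = S.card - 1 := Finset.card_erase_of_mem ha
      have c2 : S'.card = (S.erase a).card - 1 := Finset.card_erase_of_mem hia'
      have hpos : 1 ≤ S.card := Finset.card_pos.mpr ⟨a, ha⟩
      have hpos2 : 1 ≤ (S.erase a).card := Finset.card_pos.mpr ⟨i a, hia'⟩
      obtain ⟨k, hk⟩ := hE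
      exact ⟨k + 1, by omega⟩

namespace Multigraph

variable (Z : Multigraph)

lemma tail_inv (d : Z.D) : Z.tail (Z.inv d) = Z.head d := by
  unfold tail
  rw [Z.inv_inv]

lemma head_inv (d : Z.D) : Z.head (Z.inv d) = Z.tail d := rfl

lemma inv_bijective : Function.Bijective Z.inv :=
  Function.Involutive.bijective Z.inv_inv

lemma sum_darts_swap {M : Type} [AddCommMonoid M] (F : Z.V → Z.V → M) :
    ∑ d : Z.D, F (Z.tail d) (Z.head d) = ∑ d : Z.D, F (Z.head d) (Z.tail d) := by
  rw [← Function.Bijective.sum_comp Z.inv_bijective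
    (fun d => F (Z.tail d) (Z.head d))]
  simp_rw [tail_inv, head_inv]

lemma card_tail_eq_degree (v : Z.V) :
    (Finset.univ.filter fun d : Z.D => Z.tail d = v).card = Z.degree v := by
  unfold degree
  refine Finset.card_bij' (fun d _ => Z.inv d) (fun d _ => Z.inv d) ?_ ?_ ?_ ?_ <;>
    intro d hd <;> simp only [Finset.mem_filter, Finset.mem_univ, true_and] at hd ⊢
  · rw [head_inv]; exact hd
  · rw [tail_inv]; exact hd
  · exact Z.inv_inv d
  · exact Z.inv_inv d

lemma sum_over_darts_head {M : Type} [AddCommMonoid M] (F : Z.V → M) :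
    ∑ d : Z.D, F (Z.head d) = ∑ v : Z.V, Z.degree v • F v := by
  classical
  rw [← Finset.sum_fiberwise_of_maps_to (g := Z.head) (t := Finset.univ)
    (fun d _ => Finset.mem_univ _) (fun d => F (Z.head d))]
  refine Finset.sum_congr rfl fun v _ => ?_
  have hcong : ∀ d ∈ Finset.univ.filter fun d : Z.D => Z.head d = v,
      F (Z.head d) = F v := fun d hd => by rw [(Finset.mem_filter.mp hd).2]
  rw [Finset.sum_congr rfl hcong, Finset.sum_const]
  rfl

lemma sum_over_darts_pair {M : Type} [AddCommMonoid M] (F : Z.V → Z.V → M) :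
    ∑ d : Z.D, F (Z.tail d) (Z.head d) =
      ∑ v : Z.V, ∑ w : Z.V, Z.numDarts v w • F v w := by
  classical
  rw [← Finset.sum_fiberwise_of_maps_to (g := fun d => (Z.tail d, Z.head d))
    (t := Finset.univ) (fun d _ => Finset.mem_univ _)
    (fun d => F (Z.tail d) (Z.head d))]
  rw [Fintype.sum_prod_type]
  refine Finset.sum_congr rfl fun v _ => Finset.sum_congr rfl fun w _ => ?_
  have hcong : ∀ d ∈ Finset.univ.filter fun d : Z.D => (Z.tail d, Z.head d) = (v, w),
      F (Z.tail d) (Z.head d) = F v w := fun d hd => by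
    have h := (Finset.mem_filter.mp hd).2
    rw [Prod.mk.injEq] at h
    rw [h.1, h.2]
  rw [Finset.sum_congr rfl hcong, Finset.sum_const]
  have hcard : (Finset.univ.filter fun d : Z.D => (Z.tail d, Z.head d) = (v, w)).card
      = Z.numDarts v w := by
    unfold numDarts
    congr 1
    ext d
    simp [Prod.ext_iff]
  rw [hcard]

lemma sum_numDarts (u : Z.V) : ∑ w : Z.V, Z.numDarts u w = Z.degree u := by
  classical
  rw [← card_tail_eq_degree]
  rw [Finset.card_eq_sum_card_fiberwise (f := Z.head) (t := Finset.univ)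
    (fun d _ => Finset.mem_univ _)]
  refine Finset.sum_congr rfl fun w _ => ?_
  unfold numDarts
  congr 1
  rw [Finset.filter_filter]

lemma two_mul_numLoops (v : Z.V) : 2 * Z.numLoops v = Z.numDarts v v := by
  unfold numLoops
  rw [Nat.mul_div_cancel']
  obtain ⟨k, hk⟩ := even_card_of_involution
    (Finset.univ.filter fun d : Z.D => Z.tail d = v ∧ Z.head d = v) Z.inv
    (fun d hd => by
      simp only [Finset.mem_filter, Finset.mem_univ, true_and] at hd ⊢
      rw [tail_inv, head_inv]
      exact ⟨hd.2, hd.1⟩)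
    (fun d _ => Z.inv_inv d) (fun d _ => Z.inv_ne d)
  exact ⟨k, by unfold Multigraph.numDarts; omega⟩

end Multigraph

namespace CoveringMap

lemma degree_eq {Y X : Multigraph} (c : CoveringMap Y X) (w : Y.V) :
    Y.degree w = X.degree (c.vmap w) := by
  obtain ⟨hmaps, hinj, hsurj⟩ := c.star_bij w
  unfold Multigraph.degree
  refine Finset.card_bij (fun d _ => c.dmap d) ?_ ?_ ?_
  · intro d hd
    simp only [Finset.mem_filter, Finset.mem_univ, true_and] at hd ⊢
    exact hmaps hd
  · intro d1 h1 d2 h2 h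
    simp only [Finset.mem_filter, Finset.mem_univ, true_and] at h1 h2
    exact hinj h1 h2 h
  · intro b hb
    simp only [Finset.mem_filter, Finset.mem_univ, true_and] at hb
    obtain ⟨d, hd, hdb⟩ := hsurj hb
    exact ⟨d, by simpa using hd, hdb⟩

end CoveringMap

namespace GaloisCover

variable {Y X : Multigraph} {G : Type} [CommGroup G] [Fintype G] (C : GaloisCover Y X G)

lemma actV_one (w : Y.V) : C.actV 1 w = w := by rw [map_one]; rfl

lemma actV_mul (g h : G) (w : Y.V) : C.actV (g * h) w = C.actV g (C.actV h w) := by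
  rw [map_mul]; rfl

lemma act_tail (g : G) (d : Y.D) : Y.tail (C.actD g d) = C.actV g (Y.tail d) := by
  unfold Multigraph.tail
  rw [C.act_inv, C.act_head]

lemma actV_injective {g g' : G} {w : Y.V} (h : C.actV g w = C.actV g' w) : g = g' := by
  have h2 : C.actV (g'⁻¹ * g) w = w := by
    rw [actV_mul, h, ← actV_mul, inv_mul_cancel, actV_one]
  have h3 := C.act_free _ _ h2
  rw [inv_mul_eq_one] at h3
  exact h3.symm

lemma eq_s_iff (s : X.V → Y.V) (hs : ∀ v, C.vmap (s v) = v) {v v' : X.V} {σ : G} :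
    s v = C.actV σ (s v') ↔ v = v' ∧ σ = 1 := by
  constructor
  · intro h
    have hv : v = v' := by
      have := congrArg C.vmap h
      rwa [hs, C.vmap_act, hs] at this
    subst hv
    refine ⟨rfl, C.act_free σ (s v) h.symm⟩
  · rintro ⟨rfl, rfl⟩
    rw [actV_one]

/-- The decomposition `Y.V ≃ X.V × G` given by the section `s`. -/
noncomputable def fiberEquiv (s : X.V → Y.V) (hs : ∀ v, C.vmap (s v) = v) :
    X.V × G ≃ Y.V :=
  Equiv.ofBijective (fun p => C.actV p.2 (s p.1))
    ⟨by
      rintro ⟨v, σ⟩ ⟨v', σ'⟩ h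
      simp only at h
      have hv : v = v' := by
        have := congrArg C.vmap h
        rwa [C.vmap_act, C.vmap_act, hs, hs] at this
      subst hv
      exact Prod.ext rfl (C.actV_injective h),
     fun w => by
      obtain ⟨σ, hσ⟩ := C.fiber_trans (s (C.vmap w)) w (hs _)
      exact ⟨(C.vmap w, σ), hσ⟩⟩

lemma fiberEquiv_apply (s : X.V → Y.V) (hs : ∀ v, C.vmap (s v) = v) (v : X.V) (σ : G) :
    C.fiberEquiv s hs (v, σ) = C.actV σ (s v) := rfl

lemma numDarts_act (σ : G) (w w' : Y.V) :
    Y.numDarts (C.actV σ w) (C.actV σ w') = Y.numDarts w w' := by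
  unfold Multigraph.numDarts
  refine (Finset.card_bij' (fun d _ => C.actD σ d) (fun d _ => C.actD σ⁻¹ d)
    ?_ ?_ ?_ ?_).symm <;>
      intro d hd <;> simp only [Finset.mem_filter, Finset.mem_univ, true_and] at hd ⊢
  · rw [C.act_tail, C.act_head, hd.1, hd.2]
    exact ⟨rfl, rfl⟩
  · rw [C.act_tail, C.act_head, hd.1, hd.2, ← actV_mul, ← actV_mul,
      inv_mul_cancel, actV_one, actV_one]
    exact ⟨rfl, rfl⟩
  · have : C.actD σ⁻¹ (C.actD σ d) = C.actD (σ⁻¹ * σ) d := by rw [map_mul]; rfl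
    rw [this, inv_mul_cancel, map_one]; rfl
  · have : C.actD σ (C.actD σ⁻¹ d) = C.actD (σ * σ⁻¹) d := by rw [map_mul]; rfl
    rw [this, mul_inv_cancel, map_one]; rfl

lemma degree_act (σ : G) (w : Y.V) : Y.degree (C.actV σ w) = Y.degree w := by
  rw [C.toCoveringMap.degree_eq, C.toCoveringMap.degree_eq w, C.vmap_act]

lemma degree_s (s : X.V → Y.V) (hs : ∀ v, C.vmap (s v) = v) (v : X.V) :
    Y.degree (s v) = X.degree v := by
  rw [C.toCoveringMap.degree_eq, hs]

lemma sum_numDarts_fiber (s : X.V → Y.V) (hs : ∀ v, C.vmap (s v) = v) (u : Y.V) :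
    ∑ v' : X.V, ∑ σ : G, Y.numDarts u (C.actV σ (s v')) = Y.degree u := by
  have h1 : ∑ v' : X.V, ∑ σ : G, Y.numDarts u (C.actV σ (s v'))
      = ∑ p : X.V × G, Y.numDarts u (C.fiberEquiv s hs p) :=
    (Fintype.sum_prod_type
      (f := fun p : X.V × G => Y.numDarts u (C.fiberEquiv s hs p))).symm
  rw [h1, Equiv.sum_comp (C.fiberEquiv s hs) (fun w => Y.numDarts u w)]
  exact Y.sum_numDarts u

end GaloisCover
/-! ### Part C: the leading Taylor coefficient at 1 -/

lemma leadingCoeffAtOne_eq (m : ℕ) (q : Polynomial ℂ) (hq : q.eval 1 ≠ 0) :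
    leadingCoeffAtOne ((1 - Polynomial.X ^ 2) ^ m * q) = (-2) ^ m * q.eval 1 := by
  classical
  set u : Polynomial ℂ := (-1 : Polynomial ℂ) ^ m * (Polynomial.X + Polynomial.C 1) ^ m * q
    with hu
  have hfact : (1 - Polynomial.X ^ 2 : Polynomial ℂ) ^ m * q
      = (Polynomial.X - Polynomial.C 1) ^ m * u := by
    have hbase : (1 - Polynomial.X ^ 2 : Polynomial ℂ)
        = (Polynomial.X - Polynomial.C 1) * (-1 * (Polynomial.X + Polynomial.C 1)) := by
      simp only [Polynomial.C_1]
      ring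
    rw [hu, hbase, mul_pow, mul_pow]
    ring
  have hu1 : u.eval 1 = (-1 : ℂ) ^ m * 2 ^ m * q.eval 1 := by
    rw [hu]
    simp only [Polynomial.eval_mul, Polynomial.eval_pow, Polynomial.eval_add,
      Polynomial.eval_X, Polynomial.eval_C, Polynomial.eval_neg, Polynomial.eval_one]
    norm_num
  have hu1ne : u.eval 1 ≠ 0 := by
    rw [hu1]
    exact mul_ne_zero (mul_ne_zero (pow_ne_zero _ (by norm_num)) (pow_ne_zero _ two_ne_zero)) hq
  have hu0 : u ≠ 0 := fun h => hu1ne (by rw [h, Polynomial.eval_zero])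
  have hne : (Polynomial.X - Polynomial.C 1 : Polynomial ℂ) ^ m * u ≠ 0 :=
    mul_ne_zero (pow_ne_zero _ (Polynomial.X_sub_C_ne_zero 1)) hu0
  have hrm : ((Polynomial.X - Polynomial.C 1 : Polynomial ℂ) ^ m * u).rootMultiplicity 1 = m := by
    rw [Polynomial.rootMultiplicity_mul hne, Polynomial.rootMultiplicity_X_sub_C_pow,
      Polynomial.rootMultiplicity_eq_zero hu1ne, add_zero]
  unfold leadingCoeffAtOne
  rw [hfact, hrm, Polynomial.taylor_apply, Polynomial.mul_comp, Polynomial.pow_comp,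
    Polynomial.sub_comp, Polynomial.X_comp, Polynomial.C_comp]
  rw [show (Polynomial.X + Polynomial.C 1 - Polynomial.C 1 : Polynomial ℂ) = Polynomial.X by
    ring]
  have hcoeff := Polynomial.coeff_X_pow_mul (u.comp (Polynomial.X + Polynomial.C 1)) m 0
  rw [zero_add] at hcoeff
  rw [hcoeff, Polynomial.coeff_zero_eq_eval_zero, Polynomial.eval_comp]
  have : Polynomial.eval (0 : ℂ) (Polynomial.X + Polynomial.C 1) = 1 := by simp
  rw [this, hu1, neg_pow (2 : ℂ) m]
/-! ### Part D: evaluating the Laplacian determinant along characters -/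

namespace GaloisCover

variable {Y X : Multigraph} {G : Type} [CommGroup G] [Fintype G] (C : GaloisCover Y X G)

lemma Achi_apply (s : X.V → Y.V) (χ : G →* ℂ) (v v' : X.V) :
    C.Achi s χ v v' = ∑ σ : G, χ σ * (Y.numDarts (s v) (C.actV σ (s v')) : ℂ) := by
  unfold Achi
  rw [Matrix.sum_apply]
  refine Finset.sum_congr rfl fun σ _ => ?_
  simp [Asigma, Matrix.smul_apply, Matrix.map_apply, smul_eq_mul]

lemma lift_ell_eq (s : X.V → Y.V) (hs : ∀ v, C.vmap (s v) = v) (ψ : G →* ℂ) (v v' : X.V) :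
    MonoidAlgebra.lift ℤ ℂ G ψ (C.ell s v (s v')) =
      (X.degMatrix.map (fun a : ℤ => (a : ℂ)) - C.Achi s (conjChar ψ)) v v' := by
  classical
  unfold ell
  rw [map_sum]
  have hterm : ∀ σ : G, (MonoidAlgebra.lift ℤ ℂ G ψ)
      (Y.rho (s v) (C.actV σ (s v')) • MonoidAlgebra.single (σ⁻¹ : G) (1 : ℤ))
      = (Y.rho (s v) (C.actV σ (s v')) : ℂ) * conjChar ψ σ := by
    intro σ
    rw [map_zsmul, MonoidAlgebra.lift_single, one_smul, zsmul_eq_mul]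
    congr 1
    rw [conjChar_apply, char_conj, ← char_inv]
  rw [Finset.sum_congr rfl fun σ _ => hterm σ]
  have hρ : ∀ σ : G, (Y.rho (s v) (C.actV σ (s v')) : ℂ)
      = (if v = v' ∧ σ = 1 then (X.degree v : ℂ) else 0)
        - (Y.numDarts (s v) (C.actV σ (s v')) : ℂ) := by
    intro σ
    by_cases h : s v = C.actV σ (s v')
    · obtain ⟨hv, hσ⟩ := (C.eq_s_iff s hs).mp h
      subst hv; subst hσ
      rw [if_pos ⟨rfl, rfl⟩]
      have hw0 : C.actV 1 (s v) = s v := C.actV_one _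
      rw [hw0]
      have hz : Y.rho (s v) (s v) = (X.degree v : ℤ) - (Y.numDarts (s v) (s v) : ℤ) := by
        unfold Multigraph.rho
        rw [if_pos rfl, C.degree_s s hs]
        have h2 := Y.two_mul_numLoops (s v)
        omega
      rw [hz]
      push_cast
      ring
    · have hcond : ¬(v = v' ∧ σ = 1) := fun hc => h ((C.eq_s_iff s hs).mpr hc)
      rw [if_neg hcond]
      have hz : Y.rho (s v) (C.actV σ (s v'))
          = -(Y.numDarts (s v) (C.actV σ (s v')) : ℤ) := by
        unfold Multigraph.rho
        rw [if_neg h]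
        rfl
      rw [hz]
      push_cast
      ring
  rw [Finset.sum_congr rfl fun σ _ => by rw [hρ σ, sub_mul]]
  rw [Finset.sum_sub_distrib]
  rw [Matrix.sub_apply]
  congr 1
  · rw [Matrix.map_apply]
    unfold Multigraph.degMatrix
    by_cases hv : v = v'
    · subst hv
      rw [Matrix.diagonal_apply_eq]
      rw [Fintype.sum_eq_single (1 : G)
        (fun σ hσ => by rw [if_neg (fun hc => hσ hc.2), zero_mul])]
      rw [if_pos ⟨rfl, rfl⟩, map_one, mul_one]
      push_cast
      ring
    · rw [Matrix.diagonal_apply_ne _ hv]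
      rw [Finset.sum_eq_zero (fun σ _ => by rw [if_neg (fun hc => hv hc.1), zero_mul])]
      simp
  · rw [C.Achi_apply]
    exact Finset.sum_congr rfl fun σ _ => mul_comm _ _

lemma lift_lapDet (s : X.V → Y.V) (hs : ∀ v, C.vmap (s v) = v) (ψ : G →* ℂ) :
    MonoidAlgebra.lift ℤ ℂ G ψ (C.lapDet s) =
      (X.degMatrix.map (fun a : ℤ => (a : ℂ)) - C.Achi s (conjChar ψ)).det := by
  unfold lapDet
  rw [AlgHom.map_det]
  congr 1
  ext v v'
  rw [AlgHom.mapMatrix_apply, Matrix.map_apply, Matrix.of_apply]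
  exact C.lift_ell_eq s hs ψ v v'

lemma det_sub_Achi_one (s : X.V → Y.V) (hs : ∀ v, C.vmap (s v) = v) (hX : Nonempty X.V) :
    (X.degMatrix.map (fun a : ℤ => (a : ℂ)) - C.Achi s 1).det = 0 := by
  classical
  rw [← Matrix.exists_mulVec_eq_zero_iff]
  refine ⟨fun _ => 1, ?_, ?_⟩
  · intro h
    obtain ⟨v⟩ := hX
    exact one_ne_zero (congrFun h v)
  · funext v
    have hentry : ∀ v', (X.degMatrix.map (fun a : ℤ => (a : ℂ)) - C.Achi s 1) v v'
        = (if v' = v then (X.degree v : ℂ) else 0)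
          - ∑ σ : G, (Y.numDarts (s v) (C.actV σ (s v')) : ℂ) := by
      intro v'
      rw [Matrix.sub_apply, Matrix.map_apply, C.Achi_apply]
      unfold Multigraph.degMatrix
      congr 1
      · rw [Matrix.diagonal_apply]
        by_cases h : v = v'
        · subst h; simp
        · rw [if_neg h, if_neg (Ne.symm h), Int.cast_zero]
      · exact Finset.sum_congr rfl fun σ _ => by rw [MonoidHom.one_apply, one_mul]
    simp only [Matrix.mulVec, dotProduct, mul_one, Pi.zero_apply]
    rw [Finset.sum_congr rfl fun v' _ => hentry v']
    rw [Finset.sum_sub_distrib, Finset.sum_ite_eq' Finset.univ v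
      (fun _ => (X.degree v : ℂ))]
    rw [if_pos (Finset.mem_univ v)]
    have : ∑ v' : X.V, ∑ σ : G, (Y.numDarts (s v) (C.actV σ (s v')) : ℂ)
        = ((∑ v' : X.V, ∑ σ : G, Y.numDarts (s v) (C.actV σ (s v')) : ℕ) : ℂ) := by
      push_cast
      rfl
    rw [this, C.sum_numDarts_fiber s hs, C.degree_s s hs, sub_self]

lemma detPoly_eval_one (s : X.V → Y.V) (χ : G →* ℂ) :
    Polynomial.eval 1 (Matrix.det ((1 : Matrix X.V X.V (Polynomial ℂ)) -
        (Polynomial.X : Polynomial ℂ) • (C.Achi s χ).map Polynomial.C +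
        ((Polynomial.X : Polynomial ℂ) ^ 2) •
          (X.degMatrix - 1).map fun a => (a : Polynomial ℂ)))
    = (X.degMatrix.map (fun a : ℤ => (a : ℂ)) - C.Achi s χ).det := by
  rw [← Polynomial.coe_evalRingHom, RingHom.map_det]
  congr 1
  ext v v'
  simp only [Matrix.map_apply, Matrix.add_apply, Matrix.sub_apply, Matrix.smul_apply,
    Polynomial.coe_evalRingHom, Polynomial.eval_add, Polynomial.eval_sub,
    Polynomial.eval_smul, smul_eq_mul, Polynomial.eval_mul, Polynomial.eval_pow,
    Polynomial.eval_X, Polynomial.eval_C, Polynomial.eval_one, Polynomial.eval_intCast,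
    Matrix.one_apply, one_mul, one_pow]
  by_cases h : v = v' <;> simp [h] <;> push_cast <;> ring

end GaloisCover
/-! ### Part E: nonvanishing of the twisted Laplacian determinant -/

namespace GaloisCover

variable {Y X : Multigraph} {G : Type} [CommGroup G] [Fintype G] (C : GaloisCover Y X G)

lemma det_sub_Achi_ne_zero (s : X.V → Y.V) (hs : ∀ v, C.vmap (s v) = v)
    (hYconn : Y.Connected) {χ : G →* ℂ} (hχ : χ ≠ 1) :
    (X.degMatrix.map (fun a : ℤ => (a : ℂ)) - C.Achi s χ).det ≠ 0 := by
  classical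
  intro hdet
  obtain ⟨x, hx0, hx⟩ := Matrix.exists_mulVec_eq_zero_iff.mpr hdet
  set M := X.degMatrix.map (fun a : ℤ => (a : ℂ)) - C.Achi s χ with hM
  choose c hc using fun w : Y.V => C.fiber_trans (s (C.vmap w)) w (hs _)
  set f : Y.V → ℂ := fun w => χ (c w) * x (C.vmap w) with hf
  have hfact : ∀ (σ : G) (w : Y.V), f (C.actV σ w) = χ σ * f w := by
    intro σ w
    have h1 : C.vmap (C.actV σ w) = C.vmap w := C.vmap_act σ w
    have h2 : c (C.actV σ w) = σ * c w := by
      refine C.actV_injective (w := s (C.vmap w)) ?_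
      rw [C.actV_mul, hc w]
      have h3 := hc (C.actV σ w)
      rwa [h1] at h3
    show χ (c (C.actV σ w)) * x (C.vmap (C.actV σ w)) = χ σ * (χ (c w) * x (C.vmap w))
    rw [h1, h2, map_mul, mul_assoc]
  have hfs : ∀ v : X.V, f (s v) = x v := by
    intro v
    have h1 : c (s v) = 1 := by
      refine C.act_free _ (s v) ?_
      have h3 := hc (s v)
      rwa [hs v] at h3
    show χ (c (s v)) * x (C.vmap (s v)) = x v
    rw [h1, map_one, one_mul, hs]
  have hchi1 : ∀ σ : G, χ σ * (starRingEnd ℂ) (χ σ) = 1 := fun σ => by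
    rw [char_conj, mul_inv_cancel₀ (char_ne_zero χ σ)]
  set A : ℂ := ∑ v : X.V, (X.degree v : ℂ) * (x v * (starRingEnd ℂ) (x v)) with hA
  set B : ℂ := ∑ v : X.V, ∑ v' : X.V, ∑ τ : G,
    χ τ * (Y.numDarts (s v) (C.actV τ (s v')) : ℂ) * (x v' * (starRingEnd ℂ) (x v)) with hB
  -- the sum of |f|² over heads of darts
  have hP : ∑ d : Y.D, f (Y.head d) * (starRingEnd ℂ) (f (Y.head d))
      = (Fintype.card G : ℂ) * A := by
    rw [Y.sum_over_darts_head (fun w => f w * (starRingEnd ℂ) (f w))]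
    rw [← Equiv.sum_comp (C.fiberEquiv s hs)
      (fun w => Y.degree w • (f w * (starRingEnd ℂ) (f w)))]
    rw [Fintype.sum_prod_type]
    have hterm : ∀ (v : X.V) (σ : G),
        Y.degree (C.fiberEquiv s hs (v, σ)) •
          (f (C.fiberEquiv s hs (v, σ)) * (starRingEnd ℂ) (f (C.fiberEquiv s hs (v, σ))))
        = (X.degree v : ℂ) * (x v * (starRingEnd ℂ) (x v)) := by
      intro v σ
      rw [C.fiberEquiv_apply, C.degree_act σ (s v), C.degree_s s hs, hfact σ (s v),
        hfs v, map_mul (starRingEnd ℂ) (χ σ) (x v), nsmul_eq_mul]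
      linear_combination (X.degree v : ℂ) * x v * (starRingEnd ℂ) (x v) * hchi1 σ
    rw [Finset.sum_congr rfl fun v _ => Finset.sum_congr rfl fun σ _ => hterm v σ]
    rw [Finset.sum_congr rfl fun v _ =>
      Finset.sum_const ((X.degree v : ℂ) * (x v * (starRingEnd ℂ) (x v)))]
    rw [← Finset.smul_sum, Finset.card_univ, nsmul_eq_mul, hA]
  -- the sum of f(head) conj f(tail)
  have hT : ∑ d : Y.D, f (Y.head d) * (starRingEnd ℂ) (f (Y.tail d))
      = (Fintype.card G : ℂ) * B := by
    have h0 : ∑ d : Y.D, f (Y.head d) * (starRingEnd ℂ) (f (Y.tail d))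
        = ∑ w : Y.V, ∑ w' : Y.V, Y.numDarts w w' • (f w' * (starRingEnd ℂ) (f w)) :=
      Y.sum_over_darts_pair (fun a b => f b * (starRingEnd ℂ) (f a))
    rw [h0]
    rw [← Equiv.sum_comp (C.fiberEquiv s hs)
      (fun w => ∑ w' : Y.V, Y.numDarts w w' • (f w' * (starRingEnd ℂ) (f w)))]
    rw [Fintype.sum_prod_type]
    have hinner : ∀ (v : X.V) (σ : G),
        ∑ w' : Y.V, Y.numDarts (C.fiberEquiv s hs (v, σ)) w' •
            (f w' * (starRingEnd ℂ) (f (C.fiberEquiv s hs (v, σ))))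
        = ∑ v' : X.V, ∑ τ : G,
            χ τ * (Y.numDarts (s v) (C.actV τ (s v')) : ℂ)
              * (x v' * (starRingEnd ℂ) (x v)) := by
      intro v σ
      rw [← Equiv.sum_comp (C.fiberEquiv s hs)
        (fun w' => Y.numDarts (C.fiberEquiv s hs (v, σ)) w' •
          (f w' * (starRingEnd ℂ) (f (C.fiberEquiv s hs (v, σ)))))]
      rw [Fintype.sum_prod_type]
      refine Finset.sum_congr rfl fun v' _ => ?_
      rw [← Equiv.sum_comp (Equiv.mulLeft σ)
        (fun σ' => Y.numDarts (C.fiberEquiv s hs (v, σ)) (C.fiberEquiv s hs (v', σ')) •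
          (f (C.fiberEquiv s hs (v', σ')) *
            (starRingEnd ℂ) (f (C.fiberEquiv s hs (v, σ)))))]
      refine Finset.sum_congr rfl fun τ _ => ?_
      simp only [Equiv.coe_mulLeft, C.fiberEquiv_apply]
      have hnd : Y.numDarts (C.actV σ (s v)) (C.actV (σ * τ) (s v'))
          = Y.numDarts (s v) (C.actV τ (s v')) := by
        rw [C.actV_mul]
        exact C.numDarts_act σ (s v) (C.actV τ (s v'))
      rw [hnd, hfact (σ * τ) (s v'), hfact σ (s v), hfs v', hfs v, map_mul χ σ τ,
        map_mul (starRingEnd ℂ) (χ σ) (x v), nsmul_eq_mul]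
      linear_combination (Y.numDarts (s v) (C.actV τ (s v')) : ℂ) * χ τ * x v' *
        (starRingEnd ℂ) (x v) * hchi1 σ
    rw [Finset.sum_congr rfl fun v _ => Finset.sum_congr rfl fun σ _ => hinner v σ]
    rw [Finset.sum_congr rfl fun v _ => Finset.sum_const _]
    rw [← Finset.smul_sum, Finset.card_univ, nsmul_eq_mul, hB]
  -- expansion of the Laplacian pairing
  have hMv : ∀ v : X.V, (M.mulVec x) v
      = (X.degree v : ℂ) * x v - ∑ v' : X.V, C.Achi s χ v v' * x v' := by
    intro v
    simp only [hM, Matrix.mulVec, dotProduct, Matrix.sub_apply, Matrix.map_apply,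
      sub_mul]
    rw [Finset.sum_sub_distrib]
    congr 1
    show ∑ v' : X.V, ((X.degMatrix v v' : ℤ) : ℂ) * x v' = (X.degree v : ℂ) * x v
    unfold Multigraph.degMatrix
    rw [Finset.sum_eq_single v]
    · rw [Matrix.diagonal_apply_eq]
      push_cast
      ring
    · intro v' _ hne
      rw [Matrix.diagonal_apply_ne _ (Ne.symm hne), Int.cast_zero, zero_mul]
    · intro h
      exact absurd (Finset.mem_univ v) h
  have hAB : A = B := by
    have h2 : ∑ v : X.V, (starRingEnd ℂ) (x v) * (M.mulVec x) v = 0 :=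
      Finset.sum_eq_zero fun v _ => by rw [congrFun hx v, Pi.zero_apply, mul_zero]
    have h3 : ∑ v : X.V, (starRingEnd ℂ) (x v) * (M.mulVec x) v = A - B := by
      rw [Finset.sum_congr rfl fun v _ => by rw [hMv v, mul_sub]]
      rw [Finset.sum_sub_distrib]
      congr 1
      · exact Finset.sum_congr rfl fun v _ => by ring
      · rw [hB]
        refine Finset.sum_congr rfl fun v _ => ?_
        rw [Finset.mul_sum]
        refine Finset.sum_congr rfl fun v' _ => ?_
        rw [C.Achi_apply, Finset.sum_mul, Finset.mul_sum]
        refine Finset.sum_congr rfl fun τ _ => ?_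
        ring
    rw [h3] at h2
    exact (sub_eq_zero.mp h2)
  -- the quadratic form vanishes
  have hswap1 : ∑ d : Y.D, f (Y.tail d) * (starRingEnd ℂ) (f (Y.tail d))
      = ∑ d : Y.D, f (Y.head d) * (starRingEnd ℂ) (f (Y.head d)) :=
    Y.sum_darts_swap (fun a _ => f a * (starRingEnd ℂ) (f a))
  have hswap2 : ∑ d : Y.D, f (Y.tail d) * (starRingEnd ℂ) (f (Y.head d))
      = ∑ d : Y.D, f (Y.head d) * (starRingEnd ℂ) (f (Y.tail d)) :=
    Y.sum_darts_swap (fun a b => f a * (starRingEnd ℂ) (f b))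
  have hsum0 : ∑ d : Y.D, (f (Y.head d) - f (Y.tail d)) *
      (starRingEnd ℂ) (f (Y.head d) - f (Y.tail d)) = 0 := by
    have expand : ∀ d : Y.D, (f (Y.head d) - f (Y.tail d)) *
        (starRingEnd ℂ) (f (Y.head d) - f (Y.tail d))
        = (f (Y.head d) * (starRingEnd ℂ) (f (Y.head d))
            + f (Y.tail d) * (starRingEnd ℂ) (f (Y.tail d)))
          - (f (Y.head d) * (starRingEnd ℂ) (f (Y.tail d))
            + f (Y.tail d) * (starRingEnd ℂ) (f (Y.head d))) := by
      intro d
      rw [map_sub]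
      ring
    rw [Finset.sum_congr rfl fun d _ => expand d, Finset.sum_sub_distrib,
      Finset.sum_add_distrib, Finset.sum_add_distrib, hswap1, hswap2, hP, hT, hAB]
    ring
  -- hence f takes equal values across every dart
  have hft : ∀ d : Y.D, f (Y.head d) = f (Y.tail d) := by
    have hreal : ((∑ d : Y.D, Complex.normSq (f (Y.head d) - f (Y.tail d)) : ℝ) : ℂ) = 0 := by
      push_cast
      rw [← hsum0]
      exact Finset.sum_congr rfl fun d _ => (Complex.mul_conj _).symm
    have hnorm0 : ∑ d : Y.D, Complex.normSq (f (Y.head d) - f (Y.tail d)) = 0 :=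
      Complex.ofReal_eq_zero.mp hreal
    intro d
    have h1 := (Finset.sum_eq_zero_iff_of_nonneg
      (fun d _ => Complex.normSq_nonneg (f (Y.head d) - f (Y.tail d)))).mp hnorm0 d
      (Finset.mem_univ d)
    exact sub_eq_zero.mp (Complex.normSq_eq_zero.mp h1)
  -- f is constant on the connected graph Y
  have hconst : ∀ w w' : Y.V, f w = f w' := by
    intro w w'
    have h := hYconn.2 w w'
    induction h with
    | refl => rfl
    | tail _ hbc ih =>
      obtain ⟨d, hd1, hd2⟩ := hbc
      rw [ih, ← hd1, ← hd2]
      exact (hft d).symm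
  -- conclude x = 0, contradiction
  obtain ⟨τ, hτ⟩ : ∃ τ, χ τ ≠ 1 := by
    by_contra h
    push_neg at h
    exact hχ (MonoidHom.ext fun g => (h g).trans rfl)
  have hxv : ∀ v : X.V, x v = 0 := by
    intro v
    have h1 : f (C.actV τ (s v)) = f (s v) := hconst _ _
    rw [hfact, hfs] at h1
    have h2 : (χ τ - 1) * x v = 0 := by rw [sub_mul, one_mul, h1, sub_self]
    rcases mul_eq_zero.mp h2 with h | h
    · exact absurd (sub_eq_zero.mp h) hτ
    · exact h
  exact hx0 (funext hxv)

end GaloisCover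
/-! ### Part F: spectral values of the theta element -/

section ThetaLemmas

variable {G : Type} [CommGroup G] [Fintype G]

lemma mul_conjChar_eq_one_iff {χ ψ : G →* ℂ} : χ * conjChar ψ = 1 ↔ χ = ψ := by
  constructor
  · intro h
    ext g
    have h1 := DFunLike.congr_fun h g
    rw [MonoidHom.mul_apply, conjChar_apply, char_conj, MonoidHom.one_apply] at h1
    exact (mul_inv_eq_one₀ (char_ne_zero ψ g)).mp h1
  · rintro rfl
    ext g
    rw [MonoidHom.mul_apply, conjChar_apply, char_conj, MonoidHom.one_apply,
      mul_inv_cancel₀ (char_ne_zero χ g)]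

lemma conjChar_inj {χ ψ : G →* ℂ} (h : conjChar χ = ψ) : χ = conjChar ψ :=
  (conjChar_conjChar χ).symm.trans (congrArg conjChar h)

lemma lift_charIdem (ψ χ : G →* ℂ) :
    MonoidAlgebra.lift ℂ ℂ G ψ (charIdem χ) = if χ = ψ then 1 else 0 := by
  classical
  unfold charIdem
  rw [map_smul, map_sum]
  have hterm : ∀ σ : G,
      (MonoidAlgebra.lift ℂ ℂ G ψ) (χ σ • MonoidAlgebra.single (σ⁻¹ : G) (1 : ℂ))
      = (χ * conjChar ψ) σ := by
    intro σ
    rw [map_smul, MonoidAlgebra.lift_single, one_smul, smul_eq_mul]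
    rw [MonoidHom.mul_apply, conjChar_apply, char_conj, ← char_inv]
  rw [Finset.sum_congr rfl fun σ _ => hterm σ]
  by_cases h : χ = ψ
  · rw [if_pos h]
    have h1 : χ * conjChar ψ = 1 := mul_conjChar_eq_one_iff.mpr h
    rw [h1]
    rw [Finset.sum_congr rfl fun σ _ => MonoidHom.one_apply σ]
    rw [Finset.sum_const, Finset.card_univ, nsmul_eq_mul, mul_one, smul_eq_mul,
      inv_mul_cancel₀ (Nat.cast_ne_zero.mpr Fintype.card_ne_zero)]
  · rw [if_neg h, sum_char_eq_zero (fun hc => h (mul_conjChar_eq_one_iff.mp hc)), smul_zero]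

lemma lift_eAug (ψ : G →* ℂ) :
    MonoidAlgebra.lift ℂ ℂ G ψ (eAug G) = if ψ = 1 then 0 else 1 := by
  unfold eAug
  rw [map_sub, map_one, lift_charIdem]
  by_cases h : ψ = 1
  · rw [if_pos h, if_pos h.symm, sub_self]
  · rw [if_neg h, if_neg (fun hc => h hc.symm), sub_zero]

end ThetaLemmas

namespace GaloisCover

variable {Y X : Multigraph} {G : Type} [CommGroup G] [Fintype G] (C : GaloisCover Y X G)

lemma lift_thetaStar (s : X.V → Y.V) (ψ : G →* ℂ) :
    MonoidAlgebra.lift ℂ ℂ G ψ (C.thetaStar s)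
      = leadingCoeffAtOne (C.LInv s (conjChar ψ)) := by
  classical
  unfold thetaStar
  rw [finsum_eq_sum_of_fintype, map_sum]
  have hiff : ∀ χ : G →* ℂ, (conjChar χ = ψ) ↔ (χ = conjChar ψ) :=
    fun χ => ⟨fun h => conjChar_inj h, fun h => by rw [h, conjChar_conjChar]⟩
  have hterm : ∀ χ : G →* ℂ, (MonoidAlgebra.lift ℂ ℂ G ψ)
      (leadingCoeffAtOne (C.LInv s χ) • charIdem (conjChar χ))
      = if χ = conjChar ψ then leadingCoeffAtOne (C.LInv s χ) else 0 := by
    intro χ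
    rw [map_smul, lift_charIdem, smul_eq_mul, mul_ite, mul_one, mul_zero]
    exact if_congr (hiff χ) rfl rfl
  rw [Finset.sum_congr rfl fun χ _ => hterm χ]
  rw [Finset.sum_ite_eq' Finset.univ (conjChar ψ)
    (fun χ => leadingCoeffAtOne (C.LInv s χ))]
  rw [if_pos (Finset.mem_univ _)]

lemma leadingCoeffAtOne_LInv (s : X.V → Y.V) (hs : ∀ v, C.vmap (s v) = v)
    (hYconn : Y.Connected) {χ : G →* ℂ} (hχ : χ ≠ 1) :
    leadingCoeffAtOne (C.LInv s χ)
      = (-2 : ℂ) ^ (X.r - 1) *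
          (X.degMatrix.map (fun a : ℤ => (a : ℂ)) - C.Achi s χ).det := by
  unfold LInv
  rw [leadingCoeffAtOne_eq (X.r - 1) _ ?hq]
  · rw [C.detPoly_eval_one s χ]
  case hq =>
    rw [C.detPoly_eval_one s χ]
    exact C.det_sub_Achi_ne_zero s hs hYconn hχ

end GaloisCover
/-- For an abelian cover `Y/X` with automorphism group `G`,
one has `(-2)^(r_X - 1) · det_{ℤ[G]}(φ) = θ*_{Y/X}(1) · e` in `ℂ[G]`
(both sides compared coefficientwise, the left-hand side being the image of an
element of `ℤ[G]`), where `e = 1 - e_{χ₁}`. -/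
theorem equivariant_special_value (X Y : Multigraph)
    (hXconn : X.Connected) (hXdeg : X.NoDegreeOne)
    (hYconn : Y.Connected) (hYdeg : Y.NoDegreeOne)
    {G : Type} [CommGroup G] [Fintype G] (C : GaloisCover Y X G)
    (s : X.V → Y.V) (hs : ∀ v, C.vmap (s v) = v) :
    ∀ g : G, ((((-2 : ℤ) ^ (X.r - 1) • C.lapDet s).coeff g : ℤ) : ℂ) =
      (C.thetaStar s * eAug G).coeff g := by
  classical
  intro g
  have hcard : (Fintype.card G : ℂ) ≠ 0 := Nat.cast_ne_zero.mpr Fintype.card_ne_zero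
  have key : ∀ ψ : G →* ℂ,
      MonoidAlgebra.lift ℤ ℂ G ψ ((-2 : ℤ) ^ (X.r - 1) • C.lapDet s)
        = MonoidAlgebra.lift ℂ ℂ G ψ (C.thetaStar s * eAug G) := by
    intro ψ
    rw [map_zsmul, zsmul_eq_mul, C.lift_lapDet s hs ψ, map_mul, C.lift_thetaStar s ψ,
      lift_eAug]
    by_cases h : ψ = 1
    · subst h
      rw [if_pos rfl, mul_zero, conjChar_one, C.det_sub_Achi_one s hs hXconn.1, mul_zero]
    · rw [if_neg h, mul_one,
        C.leadingCoeffAtOne_LInv s hs hYconn (fun hc => h (conjChar_eq_one_iff.mp hc))]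
      push_cast
      ring
  have hL := card_mul_coeff ℤ ((-2 : ℤ) ^ (X.r - 1) • C.lapDet s) g
  have hR := card_mul_coeff ℂ (C.thetaStar s * eAug G) g
  have hsum : ∑ ψ : G →* ℂ,
        (MonoidAlgebra.lift ℤ ℂ G ψ ((-2 : ℤ) ^ (X.r - 1) • C.lapDet s)) * ψ g⁻¹
      = ∑ ψ : G →* ℂ,
        (MonoidAlgebra.lift ℂ ℂ G ψ (C.thetaStar s * eAug G)) * ψ g⁻¹ :=
    Finset.sum_congr rfl fun ψ _ => by rw [key ψ]
  rw [← hsum] at hR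
  have hfin := hL.trans hR.symm
  have h2 := mul_left_cancel₀ hcard hfin
  simpa using h2
end
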